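/- (Hopf–Cole transform, backward potential.) Let d ∈ ℕ, σ > 0, f : ℝ × ℝ^d → ℝ^d continuously differentiable in x, V : ℝ × ℝ^d → ℝ differentiable in t and twice continuously differentiable in x satisfying the Hamilton–Jacobi–Bellman equation ∂_t V + ⟨f, ∇V⟩ + (σ²/2)ΔV − (σ²/2)‖∇V‖² = 0 at every (t,x), and ρ : ℝ × ℝ^d → (0,∞) differentiable in t and twice continuously differentiable in x satisfying the Fokker–Planck equation ∂_t ρ(t,x) = −∇·(ρ(t,·)·(f(t,·) − σ²∇V(t,·)))(x) + (σ²/2)·Δρ(t,x) at every (t,x). Then ψ̂ := ρ·exp(V) satisfies the second Schrödinger-system equation: for all (t,x), ∂_t ψ̂(t,x) = (σ²/2)·Δψ̂(t,x) − ∇·(ψ̂(t,·)·f(t,·))(x). -/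

import Mathlib

open scoped RealInnerProductSpace

/-- The Laplacian of `f : ℝ^d → ℝ` at `x`: trace of the second Fréchet derivative. -/
noncomputable def lap {d : ℕ} (f : EuclideanSpace ℝ (Fin d) → ℝ)
    (x : EuclideanSpace ℝ (Fin d)) : ℝ :=
  ∑ i, fderiv ℝ (fderiv ℝ f) x (EuclideanSpace.single i 1) (EuclideanSpace.single i 1)

/-- The divergence of a vector field `w : ℝ^d → ℝ^d` at `x`: trace of the Fréchet
derivative of `w` at `x`. -/
noncomputable def diverg {d : ℕ} (w : EuclideanSpace ℝ (Fin d) → EuclideanSpace ℝ (Fin d))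
    (x : EuclideanSpace ℝ (Fin d)) : ℝ :=
  ∑ i, ⟪fderiv ℝ w x (EuclideanSpace.single i 1), EuclideanSpace.single i 1⟫

section Aux
open Real
variable {d : ℕ}

local notation "E" => EuclideanSpace ℝ (Fin d)

lemma inner_grad (φ : E → ℝ) (x v : E) :
    ⟪gradient φ x, v⟫ = fderiv ℝ φ x v :=
  InnerProductSpace.toDual_symm_apply

lemma grad_apply (φ : E → ℝ) (x : E) (i : Fin d) :
    gradient φ x i = fderiv ℝ φ x (EuclideanSpace.single i 1) := by
  rw [← inner_grad]
  simpa using (EuclideanSpace.inner_single_right (𝕜 := ℝ) i 1 (gradient φ x)).symm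

lemma inner_grad_expand (φ : E → ℝ) (x w : E) :
    ⟪w, gradient φ x⟫ = ∑ i, w i * fderiv ℝ φ x (EuclideanSpace.single i 1) := by
  rw [PiLp.inner_apply]
  exact Finset.sum_congr rfl fun i _ => by rw [grad_apply, Real.inner_apply]

lemma norm_grad_sq (φ : E → ℝ) (x : E) :
    ‖gradient φ x‖ ^ 2 = ∑ i, fderiv ℝ φ x (EuclideanSpace.single i 1) ^ 2 := by
  rw [← real_inner_self_eq_norm_sq, inner_grad_expand]
  exact Finset.sum_congr rfl fun i _ => by rw [grad_apply]; ring

lemma fderiv2_mul {g h : E → ℝ} (hg : ContDiff ℝ 2 g) (hh : ContDiff ℝ 2 h) (x v : E) :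
    fderiv ℝ (fderiv ℝ (fun y => g y * h y)) x v v
      = g x * fderiv ℝ (fderiv ℝ h) x v v + h x * fderiv ℝ (fderiv ℝ g) x v v
        + 2 * (fderiv ℝ g x v * fderiv ℝ h x v) := by
  have hg1 : Differentiable ℝ g := hg.differentiable (by norm_num)
  have hh1 : Differentiable ℝ h := hh.differentiable (by norm_num)
  have hdg : Differentiable ℝ (fderiv ℝ g) :=
    (hg.fderiv_right (m := 1) (by norm_num)).differentiable one_ne_zero
  have hdh : Differentiable ℝ (fderiv ℝ h) :=
    (hh.fderiv_right (m := 1) (by norm_num)).differentiable one_ne_zero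
  have key : fderiv ℝ (fun y => g y * h y) = fun y => g y • fderiv ℝ h y + h y • fderiv ℝ g y :=
    funext fun y => fderiv_mul (hg1 y) (hh1 y)
  have H : HasFDerivAt (fun y => g y • fderiv ℝ h y + h y • fderiv ℝ g y)
      ((g x • fderiv ℝ (fderiv ℝ h) x + (fderiv ℝ g x).smulRight (fderiv ℝ h x))
        + (h x • fderiv ℝ (fderiv ℝ g) x + (fderiv ℝ h x).smulRight (fderiv ℝ g x))) x :=
    ((hg1 x).hasFDerivAt.smul (hdh x).hasFDerivAt).add
      ((hh1 x).hasFDerivAt.smul (hdg x).hasFDerivAt)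
  rw [key, H.fderiv]
  simp [ContinuousLinearMap.smul_apply, ContinuousLinearMap.smulRight_apply, smul_eq_mul]
  ring

lemma fderiv_exp_comp {h : E → ℝ} (hh : Differentiable ℝ h) :
    fderiv ℝ (fun y => exp (h y)) = fun y => exp (h y) • fderiv ℝ h y :=
  funext fun y => ((hh y).hasFDerivAt.exp).fderiv

lemma fderiv2_exp {h : E → ℝ} (hh : ContDiff ℝ 2 h) (x v : E) :
    fderiv ℝ (fderiv ℝ (fun y => exp (h y))) x v v
      = exp (h x) * fderiv ℝ (fderiv ℝ h) x v v + exp (h x) * fderiv ℝ h x v ^ 2 := by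
  have hh1 : Differentiable ℝ h := hh.differentiable (by norm_num)
  have hdh : Differentiable ℝ (fderiv ℝ h) :=
    (hh.fderiv_right (m := 1) (by norm_num)).differentiable one_ne_zero
  have H : HasFDerivAt (fun y => exp (h y) • fderiv ℝ h y)
      (exp (h x) • fderiv ℝ (fderiv ℝ h) x
        + (exp (h x) • fderiv ℝ h x).smulRight (fderiv ℝ h x)) x :=
    ((hh1 x).hasFDerivAt.exp).smul (hdh x).hasFDerivAt
  rw [fderiv_exp_comp hh1, H.fderiv]
  simp [ContinuousLinearMap.smul_apply, ContinuousLinearMap.smulRight_apply, smul_eq_mul]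
  ring

lemma diverg_smul {g : E → ℝ} {w : E → E} (hg : Differentiable ℝ g)
    (hw : Differentiable ℝ w) (x : E) :
    diverg (fun y => g y • w y) x
      = (∑ i, fderiv ℝ g x (EuclideanSpace.single i 1) * w x i) + g x * diverg w x := by
  have H : HasFDerivAt (fun y => g y • w y)
      (g x • fderiv ℝ w x + (fderiv ℝ g x).smulRight (w x)) x :=
    (hg x).hasFDerivAt.smul (hw x).hasFDerivAt
  unfold diverg
  rw [H.fderiv, Finset.mul_sum, ← Finset.sum_add_distrib]
  refine Finset.sum_congr rfl fun i _ => ?_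
  simp only [ContinuousLinearMap.add_apply, ContinuousLinearMap.smul_apply,
    ContinuousLinearMap.smulRight_apply, inner_add_left, real_inner_smul_left]
  have : ⟪w x, EuclideanSpace.single i (1:ℝ)⟫ = w x i := by
    simpa using (EuclideanSpace.inner_single_right (𝕜 := ℝ) i 1 (w x))
  rw [this]; ring

lemma grad_differentiable {h : E → ℝ} (hh : ContDiff ℝ 2 h) :
    Differentiable ℝ (gradient h) := by
  have hdh : Differentiable ℝ (fderiv ℝ h) :=
    (hh.fderiv_right (m := 1) (by norm_num)).differentiable one_ne_zero
  exact fun x => ((InnerProductSpace.toDual ℝ E).symm.differentiable.differentiableAt).comp x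
    (hdh x)

lemma fderiv_grad {h : E → ℝ} (hh : ContDiff ℝ 2 h) (x v : E) :
    fderiv ℝ (gradient h) x v
      = (InnerProductSpace.toDual ℝ E).symm (fderiv ℝ (fderiv ℝ h) x v) := by
  have hdh : Differentiable ℝ (fderiv ℝ h) :=
    (hh.fderiv_right (m := 1) (by norm_num)).differentiable one_ne_zero
  have : gradient h = ⇑(InnerProductSpace.toDual ℝ E).symm ∘ (fderiv ℝ h) := rfl
  rw [this, LinearIsometryEquiv.comp_fderiv]
  rfl

lemma diverg_grad {h : E → ℝ} (hh : ContDiff ℝ 2 h) (x : E) :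
    diverg (gradient h) x = lap h x := by
  unfold diverg lap
  refine Finset.sum_congr rfl fun i _ => ?_
  rw [fderiv_grad hh, InnerProductSpace.toDual_symm_apply]

lemma diverg_sub_smul {w1 w2 : E → E} (hw1 : Differentiable ℝ w1)
    (hw2 : Differentiable ℝ w2) (c : ℝ) (x : E) :
    diverg (fun y => w1 y - c • w2 y) x = diverg w1 x - c * diverg w2 x := by
  have H : HasFDerivAt (fun y => w1 y - c • w2 y)
      (fderiv ℝ w1 x - c • fderiv ℝ w2 x) x :=
    (hw1 x).hasFDerivAt.sub ((hw2 x).hasFDerivAt.const_smul c)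
  unfold diverg
  rw [H.fderiv, Finset.mul_sum, ← Finset.sum_sub_distrib]
  refine Finset.sum_congr rfl fun i _ => ?_
  simp [inner_sub_left, real_inner_smul_left]
end Aux

open Real

/-- Hopf–Cole transform, backward potential: if `V` solves the HJB equation and `ρ > 0`
solves the Fokker–Planck equation with drift `f - σ²∇V`, then `ψ̂ := ρ·exp V` solves the
second Schrödinger-system equation `∂ₜψ̂ = (σ²/2)Δψ̂ - ∇·(ψ̂ f)`. -/
theorem stmt8 {d : ℕ} (σ : ℝ) (hσ : 0 < σ)
    (f : ℝ → EuclideanSpace ℝ (Fin d) → EuclideanSpace ℝ (Fin d))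
    (hf : ∀ t, ContDiff ℝ 1 (f t))
    (V : ℝ → EuclideanSpace ℝ (Fin d) → ℝ)
    (hVt : ∀ x, Differentiable ℝ fun t => V t x)
    (hVx : ∀ t, ContDiff ℝ 2 (V t))
    (hHJB : ∀ t x, deriv (fun s => V s x) t + ⟪f t x, gradient (V t) x⟫
      + σ ^ 2 / 2 * lap (V t) x - σ ^ 2 / 2 * ‖gradient (V t) x‖ ^ 2 = 0)
    (ρ : ℝ → EuclideanSpace ℝ (Fin d) → ℝ)
    (hρpos : ∀ t x, 0 < ρ t x)
    (hρt : ∀ x, Differentiable ℝ fun t => ρ t x)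
    (hρx : ∀ t, ContDiff ℝ 2 (ρ t))
    (hFP : ∀ t x, deriv (fun s => ρ s x) t
      = -diverg (fun y => ρ t y • (f t y - σ ^ 2 • gradient (V t) y)) x
        + σ ^ 2 / 2 * lap (ρ t) x) :
    ∀ t x, deriv (fun s => ρ s x * Real.exp (V s x)) t
      = σ ^ 2 / 2 * lap (fun y => ρ t y * Real.exp (V t y)) x
        - diverg (fun y => (ρ t y * Real.exp (V t y)) • f t y) x := by
  intro t x
  -- differentiability facts
  have hρ1 : Differentiable ℝ (ρ t) := (hρx t).differentiable (by norm_num)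
  have hV1 : Differentiable ℝ (V t) := (hVx t).differentiable (by norm_num)
  have hf1 : Differentiable ℝ (f t) := (hf t).differentiable one_ne_zero
  have hgradV : Differentiable ℝ (gradient (V t)) := grad_differentiable (hVx t)
  have hexpC : ContDiff ℝ 2 (fun y => exp (V t y)) := Real.contDiff_exp.comp (hVx t)
  have hexp1 : Differentiable ℝ (fun y => exp (V t y)) := hexpC.differentiable (by norm_num)
  -- atoms
  set A : Fin d → ℝ := fun i => fderiv ℝ (ρ t) x (EuclideanSpace.single i 1) with hA
  set B : Fin d → ℝ := fun i => fderiv ℝ (V t) x (EuclideanSpace.single i 1) with hB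
  set F : Fin d → ℝ := fun i => f t x i with hF
  set Ex : ℝ := exp (V t x) with hEx
  set G : ℝ := ρ t x with hG
  -- time derivative of the product
  have hd : deriv (fun s => ρ s x * exp (V s x)) t
      = deriv (fun s => ρ s x) t * Ex + G * (Ex * deriv (fun s => V s x) t) :=
    (((hρt x) t).hasDerivAt.mul (((hVt x) t).hasDerivAt.exp)).deriv
  -- HJB rewritten
  have hHJB' : deriv (fun s => V s x) t
      = σ ^ 2 / 2 * (∑ i, B i ^ 2) - (∑ i, F i * B i) - σ ^ 2 / 2 * lap (V t) x := by
    have h1 := hHJB t x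
    rw [inner_grad_expand, norm_grad_sq] at h1
    linarith
  -- Fokker–Planck divergence term
  have hw : Differentiable ℝ (fun y => f t y - σ ^ 2 • gradient (V t) y) :=
    hf1.sub (hgradV.const_smul (σ ^ 2))
  have hdiv1 : diverg (fun y => ρ t y • (f t y - σ ^ 2 • gradient (V t) y)) x
      = (∑ i, A i * (F i - σ ^ 2 * B i))
        + G * (diverg (f t) x - σ ^ 2 * lap (V t) x) := by
    rw [diverg_smul hρ1 hw, diverg_sub_smul hf1 hgradV, diverg_grad (hVx t)]
    congr 1
    refine Finset.sum_congr rfl fun i _ => ?_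
    have : (f t x - σ ^ 2 • gradient (V t) x) i = F i - σ ^ 2 * B i := by
      simp [hF, hB, ← grad_apply]
    rw [this]
  -- Laplacian of the product
  have hexpD : ∀ i, fderiv ℝ (fun y => exp (V t y)) x (EuclideanSpace.single i 1)
      = Ex * B i := by
    intro i
    rw [fderiv_exp_comp hV1]
    simp [hEx, hB, smul_eq_mul]
  have hlap : lap (fun y => ρ t y * exp (V t y)) x
      = Ex * lap (ρ t) x + G * Ex * lap (V t) x + G * Ex * (∑ i, B i ^ 2)
        + 2 * Ex * (∑ i, A i * B i) := by
    unfold lap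
    calc (∑ i, fderiv ℝ (fderiv ℝ fun y => ρ t y * exp (V t y)) x (EuclideanSpace.single i 1)
            (EuclideanSpace.single i 1))
        = ∑ i, (Ex * fderiv ℝ (fderiv ℝ (ρ t)) x (EuclideanSpace.single i 1)
              (EuclideanSpace.single i 1)
            + G * (Ex * fderiv ℝ (fderiv ℝ (V t)) x (EuclideanSpace.single i 1)
              (EuclideanSpace.single i 1) + Ex * B i ^ 2)
            + 2 * Ex * (A i * B i)) := by
          refine Finset.sum_congr rfl fun i _ => ?_
          rw [fderiv2_mul (hρx t) hexpC,
            fderiv2_exp (hVx t) x (EuclideanSpace.single i 1), hexpD i]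
          simp only [hA, hB, hEx, hG]
          ring
      _ = ∑ i, (Ex * fderiv ℝ (fderiv ℝ (ρ t)) x (EuclideanSpace.single i 1)
              (EuclideanSpace.single i 1)
            + (G * Ex) * fderiv ℝ (fderiv ℝ (V t)) x (EuclideanSpace.single i 1)
              (EuclideanSpace.single i 1)
            + (G * Ex) * B i ^ 2 + (2 * Ex) * (A i * B i)) :=
          Finset.sum_congr rfl fun i _ => by ring
      _ = _ := by
          simp only [Finset.sum_add_distrib, ← Finset.mul_sum]
  -- divergence of ψ f
  have hψ1 : Differentiable ℝ (fun y => ρ t y * exp (V t y)) := hρ1.mul hexp1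
  have hψD : ∀ i, fderiv ℝ (fun y => ρ t y * exp (V t y)) x (EuclideanSpace.single i 1)
      = G * (Ex * B i) + Ex * A i := by
    intro i
    rw [fderiv_fun_mul (hρ1 x) (hexp1 x)]
    simp only [ContinuousLinearMap.add_apply, ContinuousLinearMap.smul_apply, smul_eq_mul,
      hexpD i]
    rfl
  have hdiv2 : diverg (fun y => (ρ t y * exp (V t y)) • f t y) x
      = Ex * (∑ i, A i * F i) + G * Ex * (∑ i, B i * F i) + G * Ex * diverg (f t) x := by
    rw [diverg_smul hψ1 hf1]
    simp only [hψD]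
    rw [show (∑ i, (G * (Ex * B i) + Ex * A i) * F i)
        = ∑ i, (Ex * (A i * F i) + (G * Ex) * (B i * F i)) from
      Finset.sum_congr rfl fun i _ => by ring]
    rw [Finset.sum_add_distrib, ← Finset.mul_sum, ← Finset.mul_sum]
  -- expand the A·(F - σ²B) sum
  have hsplit : (∑ i, A i * (F i - σ ^ 2 * B i))
      = (∑ i, A i * F i) - σ ^ 2 * (∑ i, A i * B i) := by
    rw [Finset.mul_sum, ← Finset.sum_sub_distrib]
    exact Finset.sum_congr rfl fun i _ => by ring
  have hFB : (∑ i, F i * B i) = ∑ i, B i * F i :=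
    Finset.sum_congr rfl fun i _ => by ring
  rw [hd, hFP t x, hdiv1, hsplit, hHJB', hFB, hlap, hdiv2]
  ring
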